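/- Let Δ = (Σ, β) be a complete non-singular topological fan with vertex set [m], and let λ : (ℂ*)ᵐ → (ℂ*)ⁿ be defined by λ(h₁,…,hₘ) = ∏ₖ λ_{βₖ}(hₖ). Then λ is surjective and Ker λ = {(h₁,…,hₘ) ∈ (ℂ*)ᵐ : ∏ₖ hₖ^{⟨α,βₖ⟩} = 1 for all α ∈ 𝓡ⁿ}. Moreover, for I ∈ Σ of maximal cardinality n with dual set {αᵢᴵ}ᵢ∈I of {βᵢ}ᵢ∈I, Ker λ = {(h₁,…,hₘ) : hᵢ·∏_{k∉I} hₖ^{⟨αᵢᴵ,βₖ⟩} = 1 for all i ∈ I}. -/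

import Mathlib

noncomputable section

open Complex Finset

/-- `g^μ` for `μ = (b + c·i, v) ∈ ℂ × ℤ`: `|g|^(b+ci) · (g/|g|)^v`. -/
noncomputable def cpw (b c : ℝ) (v : ℤ) (g : ℂ) : ℂ :=
  ((‖g‖ : ℂ) ^ ((b : ℂ) + (c : ℂ) * Complex.I)) * (g / (‖g‖ : ℂ)) ^ v

/-- `g^μ` where `μ` is encoded as a triple `(b, c, v) : ℝ × ℝ × ℤ`. -/
noncomputable def cpwT (t : ℝ × ℝ × ℤ) (g : ℂ) : ℂ := cpw t.1 t.2.1 t.2.2 g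

/-- The product `μ₂μ₁ = (b₁b₂, b₁c₂ + c₁v₂, v₁v₂)` in the ring `𝓡 ≅ ℂ × ℤ`. -/
def rmul (μ₂ μ₁ : ℝ × ℝ × ℤ) : ℝ × ℝ × ℤ :=
  (μ₁.1 * μ₂.1, μ₁.1 * μ₂.2.1 + μ₁.2.1 * (μ₂.2.2 : ℝ), μ₁.2.2 * μ₂.2.2)

/-- The identity element of `𝓡`. -/
def rone : ℝ × ℝ × ℤ := (1, 0, 1)

/-- `⟨α, β⟩ = Σₖ αᵏ βᵏ ∈ 𝓡`. -/
def rinner {n : ℕ} (α β : Fin n → ℝ × ℝ × ℤ) : ℝ × ℝ × ℤ :=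
  ∑ k, rmul (α k) (β k)

/-- `χ^α(g₁, …, gₙ) = ∏ₖ gₖ^{αᵏ}`. -/
noncomputable def chi {n : ℕ} (α : Fin n → ℝ × ℝ × ℤ) (g : Fin n → ℂ) : ℂ :=
  ∏ k, cpwT (α k) (g k)

/-- The cone spanned by the vectors `b i`, `i ∈ I`. -/
def coneOf {n : ℕ} (m : ℕ) (b : Fin m → (Fin n → ℝ)) (I : Finset (Fin m)) :
    Set (Fin n → ℝ) :=
  {x | ∃ r : Fin m → ℝ, (∀ i, 0 ≤ r i) ∧ (∀ i ∉ I, r i = 0) ∧ x = ∑ i, r i • b i}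

/-- A complete non-singular (simplicial) topological fan of dimension `n` on the vertex set
`[m]`: an abstract simplicial complex `cx` on `Fin m` together with
`β : Fin m → 𝓡ⁿ = ℂⁿ × ℤⁿ`, `β i = (bᵢ + i·cᵢ, vᵢ)` (encoded componentwise by triples in
`ℝ × ℝ × ℤ`), such that the cones `∠b_I`, `I ∈ cx`, form a complete ordinary simplicial fan
and each `{vᵢ}_{i ∈ I}` is part of a `ℤ`-basis of `ℤⁿ` (rows of a unimodular matrix). -/
structure CompleteNonsingularTopFan (n m : ℕ) where
  cx : Finset (Finset (Fin m))
  β : Fin m → Fin n → ℝ × ℝ × ℤ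
  down_closed : ∀ I ∈ cx, ∀ J ⊆ I, J ∈ cx
  vertices : ∀ i : Fin m, {i} ∈ cx
  indep : ∀ I ∈ cx, LinearIndependent ℝ (fun i : I => fun k => (β i k).1)
  cone_inter : ∀ I ∈ cx, ∀ J ∈ cx,
    coneOf m (fun i k => (β i k).1) I ∩ coneOf m (fun i k => (β i k).1) J =
      coneOf m (fun i k => (β i k).1) (I ∩ J)
  complete : (⋃ I ∈ cx, coneOf m (fun i k => (β i k).1) I) = Set.univ
  nonsingular : ∀ I ∈ cx, ∃ (C : Matrix (Fin n) (Fin n) ℤ) (ρ : Fin m → Fin n),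
    IsUnit C.det ∧ Set.InjOn ρ (I : Set (Fin m)) ∧ ∀ i ∈ I, ∀ k, C (ρ i) k = (β i k).2.2

/-- The homomorphism `λ : (ℂ*)ᵐ → (ℂ*)ⁿ`, `λ(h₁,…,hₘ) = ∏ₖ λ_{βₖ}(hₖ)`, written on
`j`-th coordinates: `λ(h)ⱼ = ∏ₖ hₖ^{βₖʲ}`. -/
noncomputable def lamMap {n m : ℕ} (β : Fin m → Fin n → ℝ × ℝ × ℤ) (h : Fin m → ℂ) :
    Fin n → ℂ :=
  fun j => ∏ k, cpwT (β k j) (h k)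

open Real Matrix

noncomputable def EE (x θ : ℝ) : ℂ := Complex.exp (x + θ * Complex.I)

lemma EE_ne_zero (x θ : ℝ) : EE x θ ≠ 0 := Complex.exp_ne_zero _

lemma rep (g : ℂ) (hg : g ≠ 0) : EE (Real.log ‖g‖) (Complex.arg g) = g := by
  rw [EE, Complex.exp_add, ← Complex.ofReal_exp, Real.exp_log (norm_pos_iff.mpr hg),
    Complex.norm_mul_exp_arg_mul_I]

lemma prod_EE {ι : Type*} (s : Finset ι) (f g : ι → ℝ) :
    ∏ k ∈ s, EE (f k) (g k) = EE (∑ k ∈ s, f k) (∑ k ∈ s, g k) := by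
  simp only [EE]
  rw [← Complex.exp_sum]
  congr 1
  push_cast
  rw [Finset.sum_add_distrib, Finset.sum_mul]

lemma cpw_EE (b c : ℝ) (v : ℤ) (x θ : ℝ) :
    cpw b c v (EE x θ) = EE (b * x) (c * x + v * θ) := by
  have habs : (‖EE x θ‖ : ℂ) = Complex.exp (x : ℂ) := by
    rw [EE, Complex.norm_exp]
    simp [Complex.ofReal_exp]
  rw [cpw, habs]
  have h1 : Complex.exp (x:ℂ) ^ ((b:ℂ) + c * Complex.I) =
      Complex.exp (((b:ℂ) + c * Complex.I) * x) := by
    rw [Complex.cpow_def_of_ne_zero (Complex.exp_ne_zero _), Complex.log_exp, mul_comm] <;>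
      simp [Real.pi_pos, Real.pi_nonneg]
  have h2 : EE x θ / Complex.exp (x:ℂ) = Complex.exp ((θ:ℂ) * Complex.I) := by
    rw [EE, ← Complex.exp_sub]; ring_nf
  rw [h1, h2, ← Complex.exp_int_mul, ← Complex.exp_add, EE]
  congr 1
  push_cast
  ring

lemma EE_eq_one (x θ : ℝ) : EE x θ = 1 ↔ x = 0 ∧ ∃ k : ℤ, θ = k * (2 * π) := by
  rw [EE, Complex.exp_eq_one_iff]
  constructor
  · rintro ⟨k, hk⟩
    have hre := congrArg Complex.re hk
    have him := congrArg Complex.im hk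
    simp at hre him
    exact ⟨hre, k, by linarith⟩
  · rintro ⟨hx, k, hθ⟩
    exact ⟨k, by rw [hx, hθ]; push_cast; ring⟩


lemma cpwT_EE (t : ℝ × ℝ × ℤ) (x θ : ℝ) :
    cpwT t (EE x θ) = EE (t.1 * x) (t.2.1 * x + t.2.2 * θ) := cpw_EE _ _ _ _ _

lemma cpwT_one (t : ℝ × ℝ × ℤ) : cpwT t 1 = 1 := by
  have : (1 : ℂ) = EE 0 0 := by simp [EE]
  rw [this, cpwT_EE]
  simp [EE]

lemma rinner_fst {n : ℕ} (α β : Fin n → ℝ × ℝ × ℤ) :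
    (rinner α β).1 = ∑ j, (β j).1 * (α j).1 := by
  rw [rinner, Prod.fst_sum]; rfl

lemma rinner_snd {n : ℕ} (α β : Fin n → ℝ × ℝ × ℤ) :
    (rinner α β).2.1 = ∑ j, ((β j).1 * (α j).2.1 + (β j).2.1 * ((α j).2.2 : ℝ)) := by
  rw [rinner, Prod.snd_sum, Prod.fst_sum]; rfl

lemma rinner_trd {n : ℕ} (α β : Fin n → ℝ × ℝ × ℤ) :
    (rinner α β).2.2 = ∑ j, (β j).2.2 * (α j).2.2 := by
  rw [rinner, Prod.snd_sum, Prod.snd_sum]; rfl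

lemma lamMap_EE {n m : ℕ} (β : Fin m → Fin n → ℝ × ℝ × ℤ) (X Θ : Fin m → ℝ) (j : Fin n) :
    lamMap β (fun k => EE (X k) (Θ k)) j
      = EE (∑ k, (β k j).1 * X k) (∑ k, ((β k j).2.1 * X k + ((β k j).2.2 : ℝ) * Θ k)) := by
  rw [lamMap]
  simp only [cpwT_EE]
  rw [prod_EE]

lemma prod_cpwT_rinner {n m : ℕ} (β : Fin m → Fin n → ℝ × ℝ × ℤ) (α : Fin n → ℝ × ℝ × ℤ)
    (X Θ : Fin m → ℝ) :
    ∏ k, cpwT (rinner α (β k)) (EE (X k) (Θ k))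
      = EE (∑ j, (α j).1 * (∑ k, (β k j).1 * X k))
          (∑ j, ((α j).2.1 * (∑ k, (β k j).1 * X k)
            + ((α j).2.2 : ℝ) * (∑ k, ((β k j).2.1 * X k + ((β k j).2.2 : ℝ) * Θ k)))) := by
  simp only [cpwT_EE, rinner_fst, rinner_snd, rinner_trd, prod_EE]
  have swap : ∀ F : Fin m → Fin n → ℝ, ∑ k, ∑ j, F k j = ∑ j, ∑ k, F k j :=
    fun F => Finset.sum_comm
  congr 1
  · simp only [Finset.sum_mul, Finset.mul_sum]
    rw [swap]
    exact Finset.sum_congr rfl fun j _ => Finset.sum_congr rfl fun k _ => by ring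
  · push_cast
    simp only [Finset.sum_mul, Finset.mul_sum, add_mul, mul_add, Finset.sum_add_distrib]
    rw [swap, swap, swap, ← Finset.sum_add_distrib, ← Finset.sum_add_distrib,
      ← Finset.sum_add_distrib, ← Finset.sum_add_distrib]
    refine Finset.sum_congr rfl fun j _ => ?_
    rw [← Finset.sum_add_distrib, ← Finset.sum_add_distrib,
      ← Finset.sum_add_distrib, ← Finset.sum_add_distrib]
    exact Finset.sum_congr rfl fun k _ => by ring

lemma cpwT_rone (g : ℂ) (hg : g ≠ 0) : cpwT rone g = g := by
  rw [← rep g hg, cpwT_EE]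
  norm_num [rone]

lemma cpwT_zero' (g : ℂ) (hg : g ≠ 0) : cpwT 0 g = 1 := by
  rw [← rep g hg, cpwT_EE]
  norm_num [EE]

lemma rinner_delta {n : ℕ} (β : Fin n → ℝ × ℝ × ℤ) (j : Fin n) :
    rinner (fun j' => if j' = j then rone else 0) β = β j := by
  rw [rinner]
  have h1 : ∀ j', rmul (if j' = j then rone else 0) (β j') = if j' = j then β j' else 0 := by
    intro j'
    split
    · simp [rmul, rone, Prod.ext_iff]
    · simp [rmul, Prod.ext_iff]
  simp only [h1]
  simp

lemma kernel_forward {n m : ℕ} (β : Fin m → Fin n → ℝ × ℝ × ℤ) (X Θ : Fin m → ℝ)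
    (hl : lamMap β (fun k => EE (X k) (Θ k)) = fun _ => 1) (α : Fin n → ℝ × ℝ × ℤ) :
    ∏ k, cpwT (rinner α (β k)) (EE (X k) (Θ k)) = 1 := by
  have h1 : ∀ j, (∑ k, (β k j).1 * X k) = 0 ∧
      ∃ N : ℤ, (∑ k, ((β k j).2.1 * X k + ((β k j).2.2 : ℝ) * Θ k)) = N * (2 * π) := by
    intro j
    have := congrFun hl j
    rwa [lamMap_EE, EE_eq_one] at this
  choose hP hQ using h1
  choose N hN using hQ
  rw [prod_cpwT_rinner, EE_eq_one]
  refine ⟨by simp [hP], ⟨∑ j, (α j).2.2 * N j, ?_⟩⟩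
  trans (∑ j, (((α j).2.2 * N j : ℤ) : ℝ) * (2 * π))
  · exact Finset.sum_congr rfl fun j _ => by rw [hP j, hN j]; push_cast; ring
  · rw [← Finset.sum_mul]
    norm_cast


lemma cone_subset_span {n m : ℕ} (b : Fin m → (Fin n → ℝ)) (I : Finset (Fin m)) :
    coneOf m b I ⊆ (Submodule.span ℝ (b '' I) : Set (Fin n → ℝ)) := by
  rintro x ⟨r, _, hrI, rfl⟩
  apply Submodule.sum_mem
  intro i _
  by_cases hi : i ∈ I
  · exact Submodule.smul_mem _ _ (Submodule.subset_span ⟨i, hi, rfl⟩)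
  · rw [hrI i hi, zero_smul]
    exact Submodule.zero_mem _

lemma exists_full_cone (n m : ℕ) (Δ : CompleteNonsingularTopFan n m) :
    ∃ I ∈ Δ.cx, I.card = n := by
  by_contra hno
  push_neg at hno
  set b' : Fin m → (Fin n → ℝ) := fun i k => (Δ.β i k).1 with hb'
  have hcardle : ∀ I ∈ Δ.cx, I.card ≤ n := by
    intro I hI
    have := (Δ.indep I hI).fintype_card_le_finrank
    simpa [Module.finrank_fin_fun, Fintype.card_coe] using this
  have hcover : (⋃ I : Δ.cx, ((Submodule.span ℝ (b' '' (I : Finset (Fin m)))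
      : Submodule ℝ (Fin n → ℝ)) : Set (Fin n → ℝ))) = Set.univ := by
    apply Set.eq_univ_of_univ_subset
    rw [← Δ.complete]
    intro x hx
    obtain ⟨I, hI, hxI⟩ := Set.mem_iUnion₂.mp hx
    exact Set.mem_iUnion.mpr ⟨⟨I, hI⟩, cone_subset_span b' I hxI⟩
  obtain ⟨I, hItop⟩ := Subspace.exists_eq_top_of_iUnion_eq_univ hcover
  have h1 : (n : ℕ) ≤ ((I : Finset (Fin m)).image b').card := by
    have h2 : Submodule.span ℝ (((I : Finset (Fin m)).image b' : Finset (Fin n → ℝ)) :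
        Set (Fin n → ℝ)) = ⊤ := by
      rwa [Finset.coe_image]
    have h3 := finrank_span_finset_le_card (R := ℝ) ((I : Finset (Fin m)).image b')
    rw [Set.finrank, h2, finrank_top, Module.finrank_fin_fun] at h3
    exact h3
  have h4 : ((I : Finset (Fin m)).image b').card ≤ (I : Finset (Fin m)).card :=
    Finset.card_image_le
  have h5 := hcardle I I.2
  have h6 := hno I I.2
  omega


lemma surj_of_full (n m : ℕ) (Δ : CompleteNonsingularTopFan n m)
    (I : Finset (Fin m)) (hI : I ∈ Δ.cx) (hcard : I.card = n)
    (t : Fin n → ℂ) (ht : ∀ j, t j ≠ 0) :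
    ∃ h : Fin m → ℂ, (∀ k, h k ≠ 0) ∧ lamMap Δ.β h = t := by
  classical
  set β := Δ.β with hβ
  have hcard' : Fintype.card ↥I = n := by rw [Fintype.card_coe, hcard]
  set e : Fin n ≃ ↥I := (Fintype.equivFinOfCardEq hcard').symm with he
  -- the real matrix M with rows b_{e p}
  set M : Matrix (Fin n) (Fin n) ℝ := Matrix.of fun p j => (β (e p) j).1 with hM
  have hMrows : LinearIndependent ℝ (fun p => M p) := by
    have h0 := Δ.indep I hI
    exact h0.comp e e.injective
  have hMunit : IsUnit M.det :=
    (Matrix.isUnit_iff_isUnit_det M).mp (Matrix.linearIndependent_rows_iff_isUnit.mp hMrows)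
  -- the real matrix V of the integer vectors v_{e p}
  set V : Matrix (Fin n) (Fin n) ℝ := Matrix.of fun p j => ((β (e p) j).2.2 : ℝ) with hV
  have hVunit : IsUnit V.det := by
    obtain ⟨C, ρ, hCdet, hρ, hCρ⟩ := Δ.nonsingular I hI
    have hσinj : Function.Injective (fun p => ρ ((e p) : Fin m)) := by
      intro p q hpq
      exact e.injective (Subtype.ext (hρ (e p).2 (e q).2 hpq))
    have hσbij := Finite.injective_iff_bijective.mp hσinj
    set σ : Equiv.Perm (Fin n) := Equiv.ofBijective _ hσbij with hσ
    have hVeq : V = (C.map (Int.cast : ℤ → ℝ)).submatrix σ id := by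
      ext p j
      simp only [hV, Matrix.of_apply, Matrix.submatrix_apply, Matrix.map_apply, id_eq]
      rw [show σ p = ρ ((e p) : Fin m) from rfl, hCρ ((e p) : Fin m) (e p).2 j]
    rw [hVeq, Matrix.det_permute]
    rw [isUnit_iff_ne_zero]
    apply mul_ne_zero
    · rcases Int.units_eq_one_or (Equiv.Perm.sign σ) with h | h <;> simp [h]
    · have hmd : (C.map (Int.cast : ℤ → ℝ)).det = ((C.det : ℤ) : ℝ) := by
        rw [show (C.map (Int.cast : ℤ → ℝ)) = (Int.castRingHom ℝ).mapMatrix C from rfl,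
          ← RingHom.map_det]
        rfl
      rw [hmd]
      exact Int.cast_ne_zero.mpr hCdet.ne_zero
  -- solve the linear systems
  set y : Fin n → ℝ := fun j => Real.log ‖t j‖ with hy
  set τ : Fin n → ℝ := fun j => Complex.arg (t j) with hτ
  have hMT : IsUnit Mᵀ.det := by rwa [Matrix.det_transpose]
  set x : Fin n → ℝ := Mᵀ⁻¹ *ᵥ y with hx
  have hxs : Mᵀ *ᵥ x = y := by
    rw [hx, Matrix.mulVec_mulVec, Matrix.mul_nonsing_inv _ hMT, Matrix.one_mulVec]
  set w : Fin n → ℝ := fun j => τ j - ∑ p, (β (e p) j).2.1 * x p with hw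
  have hVT : IsUnit Vᵀ.det := by rwa [Matrix.det_transpose]
  set θv : Fin n → ℝ := Vᵀ⁻¹ *ᵥ w with hθv
  have hθs : Vᵀ *ᵥ θv = w := by
    rw [hθv, Matrix.mulVec_mulVec, Matrix.mul_nonsing_inv _ hVT, Matrix.one_mulVec]
  refine ⟨fun k => if hk : k ∈ I then EE (x (e.symm ⟨k, hk⟩)) (θv (e.symm ⟨k, hk⟩)) else 1,
    fun k => ?_, ?_⟩
  · dsimp only
    split
    · exact EE_ne_zero _ _
    · exact one_ne_zero
  · funext j
    show (∏ k, cpwT (β k j) _) = t j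
    rw [← Finset.prod_mul_prod_compl I]
    have hc : (∏ k ∈ Iᶜ, cpwT (β k j)
        (if hk : k ∈ I then EE (x (e.symm ⟨k, hk⟩)) (θv (e.symm ⟨k, hk⟩)) else 1)) = 1 := by
      apply Finset.prod_eq_one
      intro k hk
      rw [dif_neg (Finset.mem_compl.mp hk), cpwT_one]
    have hIp : (∏ k ∈ I, cpwT (β k j)
        (if hk : k ∈ I then EE (x (e.symm ⟨k, hk⟩)) (θv (e.symm ⟨k, hk⟩)) else 1)) = t j := by
      rw [← Finset.prod_coe_sort I]
      rw [← Equiv.prod_comp e (fun i : ↥I => cpwT (β (i : Fin m) j)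
        (if hk : (i : Fin m) ∈ I then EE (x (e.symm ⟨(i : Fin m), hk⟩))
          (θv (e.symm ⟨(i : Fin m), hk⟩)) else 1))]
      have hterm : ∀ p : Fin n, cpwT (β ((e p) : Fin m) j)
          (if hk : ((e p) : Fin m) ∈ I then EE (x (e.symm ⟨((e p) : Fin m), hk⟩))
            (θv (e.symm ⟨((e p) : Fin m), hk⟩)) else 1)
          = EE ((β (e p) j).1 * x p) ((β (e p) j).2.1 * x p + ((β (e p) j).2.2 : ℝ) * θv p) := by
        intro p
        rw [dif_pos (e p).2]
        have : (⟨((e p) : Fin m), (e p).2⟩ : ↥I) = e p := rfl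
        rw [this, e.symm_apply_apply, cpwT_EE]
      rw [Finset.prod_congr rfl fun p _ => hterm p, prod_EE]
      have h1 : (∑ p, (β (e p) j).1 * x p) = y j := by
        have := congrFun hxs j
        simpa [Matrix.mulVec, dotProduct, hM, Matrix.transpose_apply] using this
      have h2 : (∑ p, ((β (e p) j).2.1 * x p + ((β (e p) j).2.2 : ℝ) * θv p)) = τ j := by
        rw [Finset.sum_add_distrib]
        have := congrFun hθs j
        have h3 : (∑ p, ((β (e p) j).2.2 : ℝ) * θv p) = w j := by
          simpa [Matrix.mulVec, dotProduct, hV, Matrix.transpose_apply] using this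
        rw [h3, hw]
        ring
      rw [h1, h2, hy, hτ]
      exact rep (t j) (ht j)
    rw [hc, hIp, mul_one]

lemma kernel_backward_full {n m : ℕ} (β : Fin m → Fin n → ℝ × ℝ × ℤ)
    (I : Finset (Fin m)) (hcard : I.card = n) (αI : Fin m → Fin n → ℝ × ℝ × ℤ)
    (hdual : ∀ i ∈ I, ∀ i' ∈ I, rinner (αI i) (β i') = if i = i' then rone else 0)
    (X Θ : Fin m → ℝ)
    (H : ∀ i ∈ I, ∏ k, cpwT (rinner (αI i) (β k)) (EE (X k) (Θ k)) = 1) :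
    lamMap β (fun k => EE (X k) (Θ k)) = fun _ => 1 := by
  classical
  have hcard' : Fintype.card ↥I = n := by rw [Fintype.card_coe, hcard]
  set e : Fin n ≃ ↥I := (Fintype.equivFinOfCardEq hcard').symm with he
  set P : Fin n → ℝ := fun j => ∑ k, (β k j).1 * X k with hPdef
  set Q : Fin n → ℝ := fun j => ∑ k, ((β k j).2.1 * X k + ((β k j).2.2 : ℝ) * Θ k) with hQdef
  have H3 : ∀ i : ↥I, (∑ j, (αI i j).1 * P j) = 0 ∧
      ∃ N : ℤ, (∑ j, ((αI i j).2.1 * P j + ((αI i j).2.2 : ℝ) * Q j)) = N * (2 * π) := by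
    intro i
    have h0 := H i i.2
    rwa [prod_cpwT_rinner, EE_eq_one] at h0
  choose hA hB using H3
  choose N hN using hB
  have coe_ne : ∀ {p q : Fin n}, p ≠ q → ((e p) : Fin m) ≠ ((e q) : Fin m) :=
    fun hpq hc => hpq (e.injective (Subtype.ext hc))
  set A : Matrix (Fin n) (Fin n) ℝ := Matrix.of fun p j => (αI (e p) j).1 with hAdef
  set B : Matrix (Fin n) (Fin n) ℝ := Matrix.of fun p j => (β (e p) j).1 with hBdef
  have hAB : A * Bᵀ = 1 := by
    ext p q
    rw [Matrix.mul_apply, Matrix.one_apply]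
    have hd := hdual ((e p) : Fin m) (e p).2 ((e q) : Fin m) (e q).2
    have h1 : ∑ j, A p j * Bᵀ j q = (rinner (αI (e p)) (β (e q))).1 := by
      rw [rinner_fst]
      refine Finset.sum_congr rfl fun j _ => ?_
      simp only [hAdef, hBdef, Matrix.transpose_apply, Matrix.of_apply]
      ring
    rw [h1, hd]
    by_cases hpq : p = q
    · subst hpq; simp [rone]
    · rw [if_neg (coe_ne hpq), if_neg hpq]; rfl
  have hBA := mul_eq_one_comm.mp hAB
  have hP0 : ∀ j, P j = 0 := by
    have hAP : A *ᵥ P = 0 := by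
      funext p
      simpa [Matrix.mulVec, dotProduct, hAdef] using hA (e p)
    have h2 := congrArg (fun v => Bᵀ *ᵥ v) hAP
    simp only [Matrix.mulVec_mulVec, hBA, Matrix.one_mulVec, Matrix.mulVec_zero] at h2
    exact fun j => congrFun h2 j
  set U : Matrix (Fin n) (Fin n) ℤ := Matrix.of fun p j => (αI (e p) j).2.2 with hUdef
  set W : Matrix (Fin n) (Fin n) ℤ := Matrix.of fun p j => (β (e p) j).2.2 with hWdef
  have hUW : U * Wᵀ = 1 := by
    ext p q
    rw [Matrix.mul_apply, Matrix.one_apply]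
    have hd := hdual ((e p) : Fin m) (e p).2 ((e q) : Fin m) (e q).2
    have h1 : ∑ j, U p j * Wᵀ j q = (rinner (αI (e p)) (β (e q))).2.2 := by
      rw [rinner_trd]
      refine Finset.sum_congr rfl fun j _ => ?_
      simp only [hUdef, hWdef, Matrix.transpose_apply, Matrix.of_apply]
      ring
    rw [h1, hd]
    by_cases hpq : p = q
    · subst hpq; simp [rone]
    · rw [if_neg (coe_ne hpq), if_neg hpq]; rfl
  have hWU := mul_eq_one_comm.mp hUW
  have hWUs : ∀ j j' : Fin n,
      (∑ p, (β (e p) j).2.2 * (αI (e p) j').2.2) = if j = j' then 1 else 0 := by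
    intro j j'
    have h3 := congrFun (congrFun hWU j) j'
    rw [Matrix.mul_apply, Matrix.one_apply] at h3
    simpa [Matrix.transpose_apply, hWdef, hUdef] using h3
  have hNQ : ∀ i : ↥I, (∑ j, ((αI (i : Fin m) j).2.2 : ℝ) * Q j) = N i * (2 * π) := by
    intro i
    have h4 := hN i
    simpa [hP0] using h4
  funext j0
  rw [lamMap_EE, EE_eq_one]
  refine ⟨hP0 j0, ⟨∑ p, (β (e p) j0).2.2 * N (e p), ?_⟩⟩
  show Q j0 = _
  have step1 : Q j0 = ∑ j', (((if j0 = j' then (1:ℤ) else 0) : ℤ) : ℝ) * Q j' := by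
    simp [Finset.sum_ite_eq]
  rw [step1]
  have step2 : ∀ j', (((if j0 = j' then (1:ℤ) else 0) : ℤ) : ℝ)
      = ∑ p, ((β (e p) j0).2.2 : ℝ) * ((αI (e p) j').2.2 : ℝ) := by
    intro j'
    have h5 : ((∑ p, (β (e p) j0).2.2 * (αI (e p) j').2.2 : ℤ) : ℝ)
        = (((if j0 = j' then (1:ℤ) else 0) : ℤ) : ℝ) := by
      rw [hWUs j0 j']
    rw [← h5]
    push_cast
    rfl
  calc ∑ j', (((if j0 = j' then (1:ℤ) else 0) : ℤ) : ℝ) * Q j'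
      = ∑ j', (∑ p, ((β (e p) j0).2.2 : ℝ) * ((αI (e p) j').2.2 : ℝ)) * Q j' :=
        Finset.sum_congr rfl fun j' _ => by rw [step2]
    _ = ∑ p, ((β (e p) j0).2.2 : ℝ) * (∑ j', ((αI (e p) j').2.2 : ℝ) * Q j') := by
        simp only [Finset.sum_mul, Finset.mul_sum]
        rw [Finset.sum_comm]
        exact Finset.sum_congr rfl fun j' _ => Finset.sum_congr rfl fun p _ => by ring
    _ = ∑ p, ((β (e p) j0).2.2 : ℝ) * (N (e p) * (2 * π)) :=
        Finset.sum_congr rfl fun p _ => by rw [hNQ (e p)]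
    _ = (↑(∑ p, (β (e p) j0).2.2 * N (e p))) * (2 * π) := by
        push_cast
        rw [Finset.sum_mul]
        exact Finset.sum_congr rfl fun p _ => by ring


/-- for a complete non-singular topological fan `Δ = (Σ, β)`, the map
`λ : (ℂ*)ᵐ → (ℂ*)ⁿ` is surjective; its kernel is
`{h : ∏ₖ hₖ^{⟨α,βₖ⟩} = 1 for all α ∈ 𝓡ⁿ}`; and for `I ∈ Σ` with `|I| = n` and a dual set
`{αᵢᴵ}ᵢ∈I` of `{βᵢ}ᵢ∈I`, the kernel is
`{h : hᵢ·∏_{k∉I} hₖ^{⟨αᵢᴵ,βₖ⟩} = 1 for all i ∈ I}`. -/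
theorem lam_surjective_and_kernel (n m : ℕ) (Δ : CompleteNonsingularTopFan n m) :
    (∀ t : Fin n → ℂ, (∀ j, t j ≠ 0) →
      ∃ h : Fin m → ℂ, (∀ k, h k ≠ 0) ∧ lamMap Δ.β h = t) ∧
    (∀ h : Fin m → ℂ, (∀ k, h k ≠ 0) →
      ((lamMap Δ.β h = fun _ => 1) ↔
        ∀ α : Fin n → ℝ × ℝ × ℤ, ∏ k, cpwT (rinner α (Δ.β k)) (h k) = 1)) ∧
    (∀ I ∈ Δ.cx, I.card = n →
      ∀ αI : Fin m → Fin n → ℝ × ℝ × ℤ,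
        (∀ i ∈ I, ∀ i' ∈ I, rinner (αI i) (Δ.β i') = if i = i' then rone else 0) →
        ∀ h : Fin m → ℂ, (∀ k, h k ≠ 0) →
          ((lamMap Δ.β h = fun _ => 1) ↔
            ∀ i ∈ I, h i * ∏ k ∈ Iᶜ, cpwT (rinner (αI i) (Δ.β k)) (h k) = 1)) := by
  classical
  refine ⟨?_, ?_, ?_⟩
  · intro t ht
    obtain ⟨I, hI, hcard⟩ := exists_full_cone n m Δ
    exact surj_of_full n m Δ I hI hcard t ht
  · intro h hk
    obtain ⟨X, Θ, hrep⟩ : ∃ X Θ : Fin m → ℝ, h = fun k => EE (X k) (Θ k) :=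
      ⟨_, _, funext fun k => (rep _ (hk k)).symm⟩
    subst hrep
    constructor
    · intro hl α
      exact kernel_forward Δ.β X Θ hl α
    · intro H
      funext j
      have h6 := H (fun j' => if j' = j then rone else 0)
      simp only [rinner_delta] at h6
      exact h6
  · intro I hI hcard αI hdual h hk
    obtain ⟨X, Θ, hrep⟩ : ∃ X Θ : Fin m → ℝ, h = fun k => EE (X k) (Θ k) :=
      ⟨_, _, funext fun k => (rep _ (hk k)).symm⟩
    subst hrep
    have key : ∀ i ∈ I,
        (EE (X i) (Θ i)) * ∏ k ∈ Iᶜ, cpwT (rinner (αI i) (Δ.β k)) (EE (X k) (Θ k))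
        = ∏ k, cpwT (rinner (αI i) (Δ.β k)) (EE (X k) (Θ k)) := by
      intro i hi
      rw [← Finset.prod_mul_prod_compl I
        (fun k => cpwT (rinner (αI i) (Δ.β k)) (EE (X k) (Θ k)))]
      congr 1
      rw [Finset.prod_eq_single i
        (fun k hkI hki => by
          rw [hdual i hi k hkI, if_neg (fun hc => hki hc.symm), cpwT_zero' _ (EE_ne_zero _ _)])
        (fun hiI => absurd hi hiI)]
      rw [hdual i hi i hi, if_pos rfl, cpwT_rone _ (EE_ne_zero _ _)]
    constructor
    · intro hl i hi
      show EE (X i) (Θ i) * _ = 1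
      rw [key i hi]
      exact kernel_forward Δ.β X Θ hl (αI i)
    · intro H
      apply kernel_backward_full Δ.β I hcard αI hdual X Θ
      intro i hi
      rw [← key i hi]
      exact H i hi
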